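/- Let F be a graph with s vertices, t edges, and minimum degree δ ≥ 1. Then for every n ≥ s, wsat(K_n, F) ≥ t - 1 + (δ-1)(n-s)/2. -/

import Mathlib

open SimpleGraph Finset Filter

/-- `F` has a copy (an injective graph homomorphism image) in `G`. -/
def HasCopy {W V : Type*} (F : SimpleGraph W) (G : SimpleGraph V) : Prop :=
  ∃ f : W ↪ V, ∀ a b, F.Adj a b → G.Adj (f a) (f b)

/-- Adding the edge `xy` to `H` creates a new copy of `F` containing `xy`. -/
def NewCopyStep {W V : Type*} (F : SimpleGraph W) (H : SimpleGraph V) (x y : V) : Prop :=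
  ¬ H.Adj x y ∧
  ∃ f : W ↪ V, ∃ a b : W, F.Adj a b ∧ f a = x ∧ f b = y ∧
    ∀ c d, F.Adj c d → (H ⊔ SimpleGraph.fromEdgeSet {s(x, y)}).Adj (f c) (f d)

/-- The list `l` of edges can be added successively to `H`, each addition creating a
new copy of `F` containing the added edge. -/
def SatProcess {W V : Type*} (F : SimpleGraph W) : SimpleGraph V → List (V × V) → Prop
  | _, [] => True
  | H, e :: l => NewCopyStep F H e.1 e.2 ∧
      SatProcess F (H ⊔ SimpleGraph.fromEdgeSet {s(e.1, e.2)}) l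

/-- The graph obtained from `H` by adding all edges in the list `l`. -/
def addEdges {V : Type*} (H : SimpleGraph V) (l : List (V × V)) : SimpleGraph V :=
  H ⊔ SimpleGraph.fromEdgeSet {e | ∃ p ∈ l, e = s(p.1, p.2)}

/-- `H` is weakly `(G, F)`-saturated. -/
def WeaklySaturated {W V : Type*} (G : SimpleGraph V) (F : SimpleGraph W)
    (H : SimpleGraph V) : Prop :=
  H ≤ G ∧ ¬ HasCopy F H ∧ ∃ l : List (V × V), SatProcess F H l ∧ addEdges H l = G

/-- The weak saturation number `wsat(G, F)`. -/
noncomputable def wsat {W V : Type*} (G : SimpleGraph V) (F : SimpleGraph W) : ℕ :=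
  sInf {m | ∃ H, WeaklySaturated G F H ∧ H.edgeSet.ncard = m}

/- ### Auxiliary lemmas -/

lemma addEdges_nil {V : Type*} (H : SimpleGraph V) : addEdges H [] = H := by
  simp [addEdges]

lemma addEdges_cons {V : Type*} (H : SimpleGraph V) (p : V × V) (l : List (V × V)) :
    addEdges H (p :: l) = addEdges (H ⊔ SimpleGraph.fromEdgeSet {s(p.1, p.2)}) l := by
  unfold addEdges
  rw [sup_assoc, ← fromEdgeSet_union]
  congr 2
  ext e
  simp [List.mem_cons, or_and_right, exists_or, eq_comm]

lemma sup_edge_adj {V : Type*} {H : SimpleGraph V} {x y v w : V} :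
    (H ⊔ SimpleGraph.fromEdgeSet {s(x, y)}).Adj v w ↔
      H.Adj v w ∨ ((v = x ∧ w = y ∨ v = y ∧ w = x) ∧ v ≠ w) := by
  simp [sup_adj, fromEdgeSet_adj, Sym2.eq_iff]

lemma ncard_sup_edge {V : Type*} [Fintype V] (H : SimpleGraph V) {x y : V}
    (hxy : x ≠ y) (h : ¬ H.Adj x y) :
    (H ⊔ SimpleGraph.fromEdgeSet {s(x, y)}).edgeSet.ncard = H.edgeSet.ncard + 1 := by
  rw [edgeSet_sup, edgeSet_fromEdgeSet]
  have h1 : ({s(x, y)} : Set (Sym2 V)) \ {e | e.IsDiag} = {s(x, y)} := by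
    ext e
    simp only [Set.mem_diff, Set.mem_singleton_iff, Set.mem_setOf_eq, and_iff_left_iff_imp]
    rintro rfl
    simpa [Sym2.mk_isDiag_iff] using hxy
  rw [Sym2.diagSet_eq_setOfPred_isDiag, h1, Set.union_singleton,
    Set.ncard_insert_of_notMem (by rwa [mem_edgeSet]) H.edgeSet.toFinite]

lemma ncard_neighborSet_eq_degree {V : Type*} [Fintype V] (G : SimpleGraph V)
    [DecidableRel G.Adj] (v : V) : (G.neighborSet v).ncard = G.degree v := by
  rw [Set.ncard_eq_toFinset_card']
  exact Finset.card_bij (fun a _ => a) (by simp) (by simp) (by simp)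

lemma neigh_map {W V : Type*} [Finite V] (F : SimpleGraph W) (G : SimpleGraph V) (f : W ↪ V)
    (hom : ∀ c d, F.Adj c d → G.Adj (f c) (f d)) (c : W) :
    (F.neighborSet c).ncard ≤ (G.neighborSet (f c)).ncard := by
  rw [← Set.ncard_image_of_injective (F.neighborSet c) f.injective]
  refine Set.ncard_le_ncard ?_ (Set.toFinite _)
  rintro w ⟨d, hd, rfl⟩
  exact hom c d hd

/-- Every vertex of a weakly saturated graph has degree at least `δ - 1`. -/
lemma deg_lb {n : ℕ} {W : Type*} (F : SimpleGraph W) (δ : ℕ)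
    (hFdeg : ∀ c : W, δ ≤ (F.neighborSet c).ncard) (hδn : δ ≤ n) :
    ∀ (L : List (Fin n × Fin n)) (H : SimpleGraph (Fin n)),
      SatProcess F H L → addEdges H L = ⊤ → ∀ v, δ - 1 ≤ (H.neighborSet v).ncard := by
  intro L
  induction L with
  | nil =>
    intro H _ htop v
    rw [addEdges_nil] at htop
    subst htop
    have h1 : (⊤ : SimpleGraph (Fin n)).neighborSet v = {v}ᶜ := by
      ext w; simp [adj_comm, eq_comm, ne_comm]
    rw [h1]
    have : ({v}ᶜ : Set (Fin n)).ncard = n - 1 := by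
      rw [Set.ncard_eq_toFinset_card']
      rw [Set.toFinset_compl, Finset.card_compl]
      simp
    omega
  | cons p l ih =>
    intro H hsp htop v
    obtain ⟨⟨hnadj, f, a, b, hab, hfa, hfb, hcopy⟩, hsp'⟩ := hsp
    rw [addEdges_cons] at htop
    set e := SimpleGraph.fromEdgeSet {s(p.1, p.2)} with he
    by_cases hv : v = p.1 ∨ v = p.2
    · have hxy : p.1 ≠ p.2 := by
        rintro h12
        exact hab.ne (f.injective (by rw [hfa, hfb, h12]))
      obtain ⟨c, w0, hfc, hw0⟩ : ∃ c w0, f c = v ∧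
          ((H ⊔ e).neighborSet v ⊆ insert w0 (H.neighborSet v)) := by
        rcases hv with rfl | rfl
        · refine ⟨a, p.2, hfa, ?_⟩
          intro w hw
          rcases sup_edge_adj.mp hw with h | ⟨h, _⟩
          · exact Set.mem_insert_of_mem _ h
          · rcases h with ⟨_, rfl⟩ | ⟨h1, _⟩
            · exact Set.mem_insert _ _
            · exact absurd h1 hxy
        · refine ⟨b, p.1, hfb, ?_⟩
          intro w hw
          rcases sup_edge_adj.mp hw with h | ⟨h, _⟩
          · exact Set.mem_insert_of_mem _ h
          · rcases h with ⟨h1, _⟩ | ⟨_, rfl⟩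
            · exact absurd h1.symm hxy
            · exact Set.mem_insert _ _
      have h1 : δ ≤ ((H ⊔ e).neighborSet v).ncard := by
        have := neigh_map F (H ⊔ e) f hcopy c
        rw [hfc] at this
        exact le_trans (hFdeg c) this
      have h2 : ((H ⊔ e).neighborSet v).ncard ≤ (H.neighborSet v).ncard + 1 :=
        le_trans (Set.ncard_le_ncard hw0 (Set.toFinite _)) (Set.ncard_insert_le _ _)
      omega
    · push_neg at hv
      have h1 : (H ⊔ e).neighborSet v = H.neighborSet v := by
        ext w
        simp only [he, mem_neighborSet, sup_edge_adj]
        constructor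
        · rintro (h | ⟨⟨h1, _⟩ | ⟨h1, _⟩, _⟩)
          · exact h
          · exact absurd h1 hv.1
          · exact absurd h1 hv.2
        · exact Or.inl
      have := ih (H ⊔ e) hsp' htop v
      rwa [h1] at this

/-- A copy of `F` in `M ⊔ {xy}` must use the edge `xy` if `M` is `F`-free. -/
lemma copy_with_edge {W V : Type*} {F : SimpleGraph W} {M : SimpleGraph V}
    (hM : ¬ HasCopy F M) {x y : V}
    (h : HasCopy F (M ⊔ SimpleGraph.fromEdgeSet {s(x, y)})) :
    ∃ f : W ↪ V, ∃ a b : W, F.Adj a b ∧ f a = x ∧ f b = y ∧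
      ∀ c d, F.Adj c d → (M ⊔ SimpleGraph.fromEdgeSet {s(x, y)}).Adj (f c) (f d) := by
  obtain ⟨f, hf⟩ := h
  by_cases hE : ∃ a b, F.Adj a b ∧ f a = x ∧ f b = y
  · obtain ⟨a, b, hab, ha, hb⟩ := hE
    exact ⟨f, a, b, hab, ha, hb, hf⟩
  · exfalso
    apply hM
    refine ⟨f, fun c d hcd => ?_⟩
    rcases sup_edge_adj.mp (hf c d hcd) with h | ⟨⟨h1, h2⟩ | ⟨h1, h2⟩, _⟩
    · exact h
    · exact absurd ⟨c, d, hcd, h1, h2⟩ hE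
    · exact absurd ⟨d, c, hcd.symm, h2, h1⟩ hE

lemma process_of_max {W : Type*} {n : ℕ} (F : SimpleGraph W) (M : SimpleGraph (Fin n))
    (hmax : ∀ x y : Fin n, x ≠ y → ¬ M.Adj x y →
      ∃ f : W ↪ Fin n, ∃ a b : W, F.Adj a b ∧ f a = x ∧ f b = y ∧
        ∀ c d, F.Adj c d → (M ⊔ SimpleGraph.fromEdgeSet {s(x, y)}).Adj (f c) (f d)) :
    ∀ (l : List (Fin n × Fin n)) (H : SimpleGraph (Fin n)), M ≤ H →
      l.Pairwise (fun p q => s(p.1, p.2) ≠ s(q.1, q.2)) →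
      (∀ p ∈ l, p.1 ≠ p.2 ∧ ¬ H.Adj p.1 p.2) → SatProcess F H l := by
  intro l
  induction l with
  | nil => intro H _ _ _; trivial
  | cons p l ih =>
    intro H hMH hpw hmem
    obtain ⟨hne, hnadj⟩ := hmem p List.mem_cons_self
    obtain ⟨f, a, b, hab, ha, hb, hcopy⟩ :=
      hmax p.1 p.2 hne (fun h => hnadj (hMH h))
    constructor
    · exact ⟨hnadj, f, a, b, hab, ha, hb, fun c d hcd =>
        (sup_le_sup_right hMH _) (hcopy c d hcd)⟩
    · refine ih _ (le_trans hMH le_sup_left) hpw.of_cons ?_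
      intro q hq
      obtain ⟨hq1, hq2⟩ := hmem q (List.mem_cons_of_mem _ hq)
      refine ⟨hq1, fun hadj => ?_⟩
      rcases sup_edge_adj.mp hadj with h | ⟨h, _⟩
      · exact hq2 h
      · apply (List.rel_of_pairwise_cons hpw hq).symm
        rcases h with ⟨h1, h2⟩ | ⟨h1, h2⟩
        · rw [h1, h2]
        · rw [h1, h2]; exact Sym2.eq_swap

/-- A weakly saturated graph always exists (any maximal `F`-free graph works). -/
lemma exists_ws {W : Type*} {n : ℕ} (F : SimpleGraph W) (hFE : ∃ a b, F.Adj a b) :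
    ∃ H : SimpleGraph (Fin n), WeaklySaturated (⊤ : SimpleGraph (Fin n)) F H := by
  classical
  set A : Set ℕ := {m | ∃ G' : SimpleGraph (Fin n), ¬ HasCopy F G' ∧ G'.edgeSet.ncard = m}
    with hA
  have hbot : ¬ HasCopy F (⊥ : SimpleGraph (Fin n)) := by
    rintro ⟨f, hf⟩
    obtain ⟨a, b, hab⟩ := hFE
    exact hf a b hab
  have hAne : A.Nonempty := ⟨_, ⊥, hbot, rfl⟩
  have hbdd : BddAbove A := by
    refine ⟨Nat.card (Sym2 (Fin n)), ?_⟩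
    rintro m ⟨G', _, rfl⟩
    calc G'.edgeSet.ncard ≤ (Set.univ : Set (Sym2 (Fin n))).ncard :=
          Set.ncard_le_ncard (Set.subset_univ _) (Set.toFinite _)
      _ = _ := Set.ncard_univ _
  obtain ⟨M, hMfree, hMcard⟩ := Nat.sSup_mem hAne hbdd
  have hmax : ∀ x y : Fin n, x ≠ y → ¬ M.Adj x y →
      ∃ f : W ↪ Fin n, ∃ a b : W, F.Adj a b ∧ f a = x ∧ f b = y ∧
        ∀ c d, F.Adj c d → (M ⊔ SimpleGraph.fromEdgeSet {s(x, y)}).Adj (f c) (f d) := by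
    intro x y hxy hnadj
    refine copy_with_edge hMfree ?_
    by_contra hno
    have hmem : (M ⊔ SimpleGraph.fromEdgeSet {s(x, y)}).edgeSet.ncard ∈ A := ⟨_, hno, rfl⟩
    have hle := le_csSup hbdd hmem
    rw [ncard_sup_edge M hxy hnadj, hMcard] at hle
    omega
  set T : Finset (Sym2 (Fin n)) := (⊤ : SimpleGraph (Fin n)).edgeFinset \ M.edgeFinset with hT
  set l : List (Fin n × Fin n) := T.toList.map (fun e => (e.out.1, e.out.2)) with hl
  have houte : ∀ e : Sym2 (Fin n), s(e.out.1, e.out.2) = e := fun e => e.out_eq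
  have hmem : ∀ p ∈ l, p.1 ≠ p.2 ∧ ¬ M.Adj p.1 p.2 := by
    intro p hp
    rw [hl, List.mem_map] at hp
    obtain ⟨e, he, rfl⟩ := hp
    rw [Finset.mem_toList, hT, Finset.mem_sdiff, mem_edgeFinset, mem_edgeFinset] at he
    obtain ⟨he1, he2⟩ := he
    rw [← houte e, mem_edgeSet] at he1 he2
    exact ⟨he1.ne, he2⟩
  have hpw : l.Pairwise (fun p q => s(p.1, p.2) ≠ s(q.1, q.2)) := by
    refine List.Pairwise.map _ ?_ T.nodup_toList
    intro e e' hne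
    rwa [houte, houte]
  refine ⟨M, le_top, hMfree, l, ?_, ?_⟩
  · exact process_of_max F M hmax l M le_rfl hpw hmem
  · ext v w
    simp only [addEdges, sup_adj, fromEdgeSet_adj, top_adj, Set.mem_setOf_eq]
    constructor
    · rintro (h | ⟨_, h⟩)
      · exact h.ne
      · exact h
    · intro hvw
      by_cases hM : M.Adj v w
      · exact Or.inl hM
      · refine Or.inr ⟨⟨(s(v, w).out.1, s(v, w).out.2), ?_, ?_⟩, hvw⟩
        · rw [hl, List.mem_map]
          refine ⟨s(v, w), ?_, rfl⟩
          rw [Finset.mem_toList, hT, Finset.mem_sdiff, mem_edgeFinset, mem_edgeFinset,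
            mem_edgeSet, mem_edgeSet]
          exact ⟨hvw, hM⟩
        · rw [houte]

/-- The main counting argument, in `ℕ`. -/
lemma main_count {s n : ℕ} (F : SimpleGraph (Fin s)) [DecidableRel F.Adj]
    (hδ : 1 ≤ F.minDegree) (hn : s ≤ n) (H : SimpleGraph (Fin n))
    (hws : WeaklySaturated (⊤ : SimpleGraph (Fin n)) F H) :
    2 * F.edgeSet.ncard + (F.minDegree - 1) * (n - s) ≤ 2 * H.edgeSet.ncard + 2 := by
  classical
  have hs0 : s ≠ 0 := by
    rintro rfl
    simp [SimpleGraph.minDegree] at hδ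
  haveI : Nonempty (Fin s) := ⟨⟨0, Nat.pos_of_ne_zero hs0⟩⟩
  set δ := F.minDegree with hδdef
  have hFdeg : ∀ c : Fin s, δ ≤ (F.neighborSet c).ncard := fun c => by
    rw [ncard_neighborSet_eq_degree]
    exact F.minDegree_le_degree c
  have hδs : δ < s := lt_of_le_of_lt (F.minDegree_le_degree (Classical.arbitrary _))
    (by simpa using F.degree_lt_card_verts (Classical.arbitrary _))
  obtain ⟨hle, hfree, L, hsp, htop⟩ := hws
  cases L with
  | nil =>
    exfalso
    rw [addEdges_nil] at htop
    subst htop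
    exact hfree ⟨Fin.castLEEmb hn, fun a b hab => by
      simpa using fun h => hab.ne ((Fin.castLEEmb hn).injective h)⟩
  | cons p L' =>
    have hspc : NewCopyStep F H p.1 p.2 ∧
        SatProcess F (H ⊔ SimpleGraph.fromEdgeSet {s(p.1, p.2)}) L' := hsp
    obtain ⟨⟨hnadj, f, a, b, hab, hfa, hfb, hcopy⟩, hsp'⟩ := hspc
    have hxy : p.1 ≠ p.2 := by
      rintro h12
      exact hab.ne (f.injective (by rw [hfa, hfb, h12]))
    set H' := H ⊔ SimpleGraph.fromEdgeSet {s(p.1, p.2)} with hH'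
    have hHH' : H ≤ H' := le_sup_left
    have hcard' : H'.edgeSet.ncard = H.edgeSet.ncard + 1 := ncard_sup_edge H hxy hnadj
    have hhs : ∑ v, H'.degree v = 2 * (H.edgeSet.ncard + 1) := by
      rw [sum_degrees_eq_twice_card_edges, ← hcard', ← coe_edgeFinset, Set.ncard_coe_finset]
      congr 1
      exact Finset.card_bij (fun a _ => a) (by simp) (by simp) (by simp)
    set C : Finset (Fin n) := Finset.univ.image f with hC
    have hCcard : C.card = s := by
      rw [hC, Finset.card_image_of_injective _ f.injective, card_univ, Fintype.card_fin]
    have h2t : 2 * F.edgeSet.ncard ≤ ∑ v ∈ C, H'.degree v := by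
      rw [hC, Finset.sum_image (fun x _ y _ h => f.injective h)]
      have hFh : ∑ c, F.degree c = 2 * F.edgeSet.ncard := by
        rw [sum_degrees_eq_twice_card_edges, ← coe_edgeFinset, Set.ncard_coe_finset]
      rw [← hFh]
      refine Finset.sum_le_sum fun c _ => ?_
      rw [← ncard_neighborSet_eq_degree, ← ncard_neighborSet_eq_degree]
      exact neigh_map F H' f hcopy c
    have hout : ∀ v, δ - 1 ≤ H'.degree v := fun v => by
      have h1 := deg_lb F δ hFdeg (by omega) _ H hsp htop v
      rw [← ncard_neighborSet_eq_degree]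
      exact le_trans h1 (Set.ncard_le_ncard (fun w hw => hHH' hw) (Set.toFinite _))
    have hsum_out : (n - s) * (δ - 1) ≤ ∑ v ∈ Cᶜ, H'.degree v := by
      have hcc : Cᶜ.card = n - s := by
        rw [Finset.card_compl, hCcard, Fintype.card_fin]
      calc (n - s) * (δ - 1) = ∑ _v ∈ Cᶜ, (δ - 1) := by
            rw [Finset.sum_const, smul_eq_mul, hcc]
        _ ≤ _ := Finset.sum_le_sum fun v _ => hout v
    have hsplit : ∑ v ∈ C, H'.degree v + ∑ v ∈ Cᶜ, H'.degree v = ∑ v, H'.degree v :=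
      Finset.sum_add_sum_compl C _
    have key : 2 * F.edgeSet.ncard + (n - s) * (δ - 1) ≤ 2 * (H.edgeSet.ncard + 1) := by
      omega
    have hcomm : (δ - 1) * (n - s) = (n - s) * (δ - 1) := Nat.mul_comm _ _
    omega

/-- for a graph `F` with `s` vertices, `t` edges and minimum degree
`δ ≥ 1`, for every `n ≥ s`, `wsat(K_n, F) ≥ t - 1 + (δ-1)(n-s)/2`. -/
theorem stmt1 {s n : ℕ} (F : SimpleGraph (Fin s)) [DecidableRel F.Adj]
    (hδ : 1 ≤ F.minDegree) (hn : s ≤ n) :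
    (F.edgeSet.ncard : ℝ) - 1 +
        ((F.minDegree : ℝ) - 1) * ((n : ℝ) - s) / 2
      ≤ (wsat (⊤ : SimpleGraph (Fin n)) F : ℝ) := by
  classical
  have hs0 : s ≠ 0 := by
    rintro rfl
    simp [SimpleGraph.minDegree] at hδ
  haveI : Nonempty (Fin s) := ⟨⟨0, Nat.pos_of_ne_zero hs0⟩⟩
  have hFE : ∃ a b : Fin s, F.Adj a b := by
    obtain ⟨w, hw⟩ := (F.degree_pos_iff_exists_adj (Classical.arbitrary _)).mp
      (lt_of_lt_of_le hδ (F.minDegree_le_degree _))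
    exact ⟨_, w, hw⟩
  obtain ⟨H0, hH0⟩ := exists_ws (n := n) F hFE
  have hne : {m | ∃ H, WeaklySaturated (⊤ : SimpleGraph (Fin n)) F H ∧
      H.edgeSet.ncard = m}.Nonempty := ⟨_, H0, hH0, rfl⟩
  obtain ⟨H, hws, hcard⟩ := Nat.sInf_mem hne
  rw [wsat, ← hcard]
  have hmain := main_count F hδ hn H hws
  have h1 : ((F.minDegree - 1 : ℕ) : ℝ) = (F.minDegree : ℝ) - 1 := by
    push_cast [Nat.cast_sub hδ]; ring
  have h2 : ((n - s : ℕ) : ℝ) = (n : ℝ) - s := by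
    push_cast [Nat.cast_sub hn]; ring
  have hR : 2 * (F.edgeSet.ncard : ℝ) + ((F.minDegree : ℝ) - 1) * ((n : ℝ) - s)
      ≤ 2 * (H.edgeSet.ncard : ℝ) + 2 := by
    rw [← h1, ← h2]
    exact_mod_cast hmain
  linarith
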